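/- Let S be a commutative ring that is a ℚ-algebra and f, g ∈ S[X]. Then for every x ∈ S, Sum(g)(Sum(f)(x)) = Sum(h)(x), where h ∈ S[X] is the polynomial h := Sum(g)∘Sum(f) − Sum(g)∘(Sum(f)∘(X − 1)) (compositions of polynomials). In other words, the dependent sum Σ^{Σ^x f} g equals Σ^x of the fiberwise sums of g over f. -/

import Mathlib

set_option maxRecDepth 8000


open Polynomial

/-- The `d`-th Faulhaber polynomial over a commutative `ℚ`-algebra `S`:
`F_d := (1/(d+1)) ∑_{n=0}^{d} C(d+1,n) · B'_n · X^{d-n+1}`, where `B'_n` is the Bernoulli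
number with the convention `B'_1 = +1/2`. -/
noncomputable def faulhaber (S : Type*) [CommRing S] [Algebra ℚ S] (d : ℕ) : Polynomial S :=
  Polynomial.C (algebraMap ℚ S (1 / (d + 1))) *
    ∑ n ∈ Finset.range (d + 1),
      Polynomial.C (algebraMap ℚ S (((d + 1).choose n : ℚ) * bernoulli' n)) *
        Polynomial.X ^ (d - n + 1)

/-- For `p = ∑_{i} p_i X^i`, the polynomial `Sum(p) := ∑_{i} p_i · F_i`. -/
noncomputable def polySum {S : Type*} [CommRing S] [Algebra ℚ S] (p : Polynomial S) :
    Polynomial S :=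
  ∑ i ∈ Finset.range (p.natDegree + 1), Polynomial.C (p.coeff i) * faulhaber S i

set_option maxRecDepth 8000 in
lemma faulhaber_map {S : Type*} [CommRing S] [Algebra ℚ S] (d : ℕ) :
    (faulhaber ℚ d).map (algebraMap ℚ S) = faulhaber S d := by
  unfold faulhaber
  simp only [Polynomial.map_mul, Polynomial.map_sum, Polynomial.map_pow, map_C, map_X,
    Algebra.algebraMap_self_apply]

lemma faulhaber_eval_zero {S : Type*} [CommRing S] [Algebra ℚ S] (d : ℕ) :
    (faulhaber S d).eval 0 = 0 := by
  unfold faulhaber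
  rw [eval_mul, eval_finset_sum]
  have key : ∀ n ∈ Finset.range (d + 1),
      eval 0 (C (algebraMap ℚ S (((d + 1).choose n : ℚ) * bernoulli' n)) * X ^ (d - n + 1)) = 0 := by
    intro n _
    rw [eval_mul, eval_pow, eval_X, zero_pow (by omega), mul_zero]
  rw [Finset.sum_congr rfl key, Finset.sum_const_zero, mul_zero]

lemma faulhaber_eval_nat (d n : ℕ) :
    (faulhaber ℚ d).eval (n : ℚ) = ∑ k ∈ Finset.Ico 1 (n + 1), (k : ℚ) ^ d := by
  rw [sum_Ico_pow]
  unfold faulhaber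
  simp only [eval_mul, eval_C, eval_finset_sum, eval_pow, eval_X,
    Algebra.algebraMap_self_apply, Finset.mul_sum]
  refine Finset.sum_congr rfl fun i hi => ?_
  rw [Finset.mem_range] at hi
  have h1 : d - i + 1 = d + 1 - i := by omega
  rw [h1]
  have h2 : ((d : ℚ) + 1) ≠ 0 := by positivity
  field_simp

lemma faulhaber_sub_comp_rat (d : ℕ) :
    faulhaber ℚ d - (faulhaber ℚ d).comp (X - C 1) = X ^ d := by
  apply eq_of_infinite_eval_eq
  apply Set.infinite_of_injective_forall_mem (f := fun n : ℕ => ((n : ℚ) + 1))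
  · intro a b hab
    simpa using hab
  · intro n
    simp only [Set.mem_setOf_eq, eval_sub, eval_comp, eval_X, eval_C, eval_pow]
    have h1 : ((n : ℚ) + 1) - 1 = (n : ℚ) := by ring
    rw [h1]
    have h2 : ((n : ℚ) + 1) = ((n + 1 : ℕ) : ℚ) := by push_cast; ring
    rw [h2, faulhaber_eval_nat, faulhaber_eval_nat]
    rw [Finset.sum_Ico_succ_top (by omega)]
    push_cast
    ring

lemma faulhaber_sub_comp {S : Type*} [CommRing S] [Algebra ℚ S] (d : ℕ) :
    faulhaber S d - (faulhaber S d).comp (X - C 1) = X ^ d := by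
  have := congrArg (Polynomial.map (algebraMap ℚ S)) (faulhaber_sub_comp_rat d)
  simpa [Polynomial.map_comp, faulhaber_map] using this

lemma polySum_sub_comp {S : Type*} [CommRing S] [Algebra ℚ S] (p : Polynomial S) :
    polySum p - (polySum p).comp (X - C 1) = p := by
  unfold polySum
  rw [Polynomial.sum_comp, ← Finset.sum_sub_distrib]
  have key : ∀ i ∈ Finset.range (p.natDegree + 1),
      C (p.coeff i) * faulhaber S i - (C (p.coeff i) * faulhaber S i).comp (X - C 1)
        = C (p.coeff i) * X ^ i := by
    intro i _
    rw [mul_comp, C_comp, ← mul_sub, faulhaber_sub_comp]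
  rw [Finset.sum_congr rfl key]
  conv_rhs => rw [p.as_sum_range' (p.natDegree + 1) (by omega)]
  simp [C_mul_X_pow_eq_monomial]

lemma polySum_eval_zero {S : Type*} [CommRing S] [Algebra ℚ S] (p : Polynomial S) :
    (polySum p).eval 0 = 0 := by
  simp [polySum, eval_finset_sum, faulhaber_eval_zero]

lemma eq_C_of_comp_eq {S : Type*} [CommRing S] [Algebra ℚ S] (q : Polynomial S)
    (h : q.comp (X - C 1) = q) : q = C (q.coeff 0) := by
  by_contra hne
  have hq0 : q ≠ 0 := fun h0 => hne (by simp [h0])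
  have hd : 0 < q.natDegree := by
    rcases Nat.eq_zero_or_pos q.natDegree with h0 | h0
    · exact absurd (q.eq_C_of_natDegree_eq_zero h0) hne
    · exact h0
  obtain ⟨e, he⟩ : ∃ e, q.natDegree = e + 1 := ⟨q.natDegree - 1, by omega⟩
  have hX : (X : Polynomial S) - C 1 = X + C (-1) := by
    rw [map_neg, sub_eq_add_neg]
  have hcomp : q.comp (X - C 1)
      = ∑ i ∈ Finset.range (q.natDegree + 1), C (q.coeff i) * (X + C (-1)) ^ i := by
    conv_lhs => rw [q.as_sum_range' (q.natDegree + 1) (by omega)]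
    rw [Polynomial.sum_comp]
    refine Finset.sum_congr rfl fun i _ => ?_
    rw [← C_mul_X_pow_eq_monomial, mul_comp, C_comp, pow_comp, X_comp, hX]
  have hco := congrArg (fun r => r.coeff e) h
  simp only [hcomp, finset_sum_coeff, coeff_C_mul, coeff_X_add_C_pow] at hco
  rw [he] at hco
  rw [Finset.sum_range_succ, Finset.sum_range_succ] at hco
  have hzero : ∀ i ∈ Finset.range e, q.coeff i * ((-1 : S) ^ (i - e) * (i.choose e : S)) = 0 := by
    intro i hi
    rw [Finset.mem_range] at hi
    rw [Nat.choose_eq_zero_of_lt hi]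
    simp
  rw [Finset.sum_congr rfl hzero, Finset.sum_const_zero, zero_add] at hco
  have h1 : e + 1 - e = 1 := by omega
  rw [Nat.sub_self, h1, Nat.choose_self, Nat.choose_succ_self_right] at hco
  have hkey : ((e + 1 : ℕ) : S) * q.coeff (e + 1) = 0 := by
    push_cast at hco ⊢
    linear_combination -hco
  have hunit : IsUnit ((e + 1 : ℕ) : S) := by
    have : algebraMap ℚ S ((e + 1 : ℕ) : ℚ) = ((e + 1 : ℕ) : S) := by
      rw [map_natCast]
    rw [← this]
    exact (isUnit_iff_ne_zero.mpr (by positivity)).map (algebraMap ℚ S)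
  have hc0 : q.coeff (e + 1) = 0 := (IsUnit.mul_right_eq_zero hunit).mp hkey
  have : q.leadingCoeff ≠ 0 := leadingCoeff_ne_zero.mpr hq0
  rw [leadingCoeff, he] at this
  exact this hc0

lemma comp_eq_of_sub_comp_eq {S : Type*} [CommRing S] [Algebra ℚ S] (A B : Polynomial S)
    (h : A - A.comp (X - C 1) = B - B.comp (X - C 1)) (h0 : A.eval 0 = B.eval 0) : A = B := by
  have h1 : (A - B).comp (X - C 1) = A - B := by
    rw [sub_comp]
    have : A - B - (A.comp (X - C 1) - B.comp (X - C 1)) = 0 := by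
      linear_combination h
    linear_combination -this
  have h2 := eq_C_of_comp_eq _ h1
  rw [coeff_zero_eq_eval_zero] at h2
  simp only [eval_sub, h0, sub_self, map_zero] at h2
  exact sub_eq_zero.mp h2

/-- Sum associativity for the dependent adder `𝔸¹`: `Sum(g)(Sum(f)(x)) = Sum(h)(x)` where
`h := Sum(g)∘Sum(f) − Sum(g)∘(Sum(f)∘(X − 1))`. -/
theorem polySum_sum_assoc {S : Type*} [CommRing S] [Algebra ℚ S] (f g : Polynomial S)
    (x : S) :
    (polySum g).eval ((polySum f).eval x) =
      (polySum ((polySum g).comp (polySum f) -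
        (polySum g).comp ((polySum f).comp (Polynomial.X - Polynomial.C 1)))).eval x := by
  set h := (polySum g).comp (polySum f) -
      (polySum g).comp ((polySum f).comp (X - C 1)) with hh
  have key : (polySum g).comp (polySum f) = polySum h := by
    apply comp_eq_of_sub_comp_eq
    · rw [polySum_sub_comp, hh, comp_assoc]
    · rw [polySum_eval_zero, eval_comp, polySum_eval_zero, polySum_eval_zero]
  rw [← key, eval_comp]
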